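/- With V = Q ⊕ U ⊕ U* graded as V_{−1}=U, V₀=Q, V₁=U* and ω̃ as above with ω ≠ 0, if an element α ∈ 𝔰𝔭_{ω̃}(V)₂ satisfies [α, 𝔰𝔭_{ω̃}(V)_{−1}] = 0, then α = 0; similarly if β ∈ 𝔰𝔭_{ω̃}(V)₁ satisfies [β, 𝔰𝔭_{ω̃}(V)_{−2}] = 0, then β = 0. -/
import Mathlib


noncomputable section

variable (U : Type*) [AddCommGroup U] [Module ℂ U]
variable (Q : Type*) [AddCommGroup Q] [Module ℂ Q]

/-- `V = Q ⊕ U ⊕ U*`, graded by `V₋₁ = U`, `V₀ = Q`, `V₁ = U*`. -/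
abbrev Vtot := Q × U × Module.Dual ℂ U

/-- The extension `ω̃` of `ω ∈ Λ²Q*` to `V = Q ⊕ U ⊕ U*`. -/
def omegaT (ω : Q →ₗ[ℂ] Q →ₗ[ℂ] ℂ) (x y : Vtot U Q) : ℂ :=
  ω x.1 y.1 + x.2.2 y.2.1 - y.2.2 x.2.1

/-- Membership in `𝔰𝔭_{ω̃}(V)`. -/
def InSp (ω : Q →ₗ[ℂ] Q →ₗ[ℂ] ℂ) (φ : Vtot U Q →ₗ[ℂ] Vtot U Q) : Prop :=
  ∀ x y : Vtot U Q, omegaT U Q ω (φ x) y + omegaT U Q ω x (φ y) = 0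

/-- Degree `2` piece: `U → U*`, all else killed. -/
def IsDeg₂ (φ : Vtot U Q →ₗ[ℂ] Vtot U Q) : Prop :=
  ∃ α : U →ₗ[ℂ] Module.Dual ℂ U, ∀ x : Vtot U Q, φ x = (0, 0, α x.2.1)

/-- Degree `1` piece: `U → Q` and `Q → U*`. -/
def IsDeg₁ (φ : Vtot U Q →ₗ[ℂ] Vtot U Q) : Prop :=
  ∃ (β : U →ₗ[ℂ] Q) (β' : Q →ₗ[ℂ] Module.Dual ℂ U),
    ∀ x : Vtot U Q, φ x = (β x.2.1, 0, β' x.1)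

/-- Degree `-1` piece: `U* → Q` and `Q → U`. -/
def IsDegNeg₁ (φ : Vtot U Q →ₗ[ℂ] Vtot U Q) : Prop :=
  ∃ (γ : Module.Dual ℂ U →ₗ[ℂ] Q) (γ' : Q →ₗ[ℂ] U),
    ∀ x : Vtot U Q, φ x = (γ x.2.2, γ' x.1, 0)

/-- Degree `-2` piece: `U* → U`, all else killed. -/
def IsDegNeg₂ (φ : Vtot U Q →ₗ[ℂ] Vtot U Q) : Prop :=
  ∃ η : Module.Dual ℂ U →ₗ[ℂ] U, ∀ x : Vtot U Q, φ x = (0, η x.2.2, 0)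

/- STATEMENT 14: if `α ∈ 𝔰𝔭_{ω̃}(V)₂` satisfies `[α, 𝔰𝔭_{ω̃}(V)₋₁] = 0` then
`α = 0`; and if `β ∈ 𝔰𝔭_{ω̃}(V)₁` satisfies `[β, 𝔰𝔭_{ω̃}(V)₋₂] = 0` then
`β = 0`. -/
theorem sp_bracket_injectivity
    (hU : 2 ≤ Module.finrank ℂ U)
    (ω : Q →ₗ[ℂ] Q →ₗ[ℂ] ℂ) (halt : ∀ q : Q, ω q q = 0) (hne : ω ≠ 0) :
    (∀ φ : Vtot U Q →ₗ[ℂ] Vtot U Q, InSp U Q ω φ → IsDeg₂ U Q φ →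
      (∀ ψ : Vtot U Q →ₗ[ℂ] Vtot U Q, InSp U Q ω ψ → IsDegNeg₁ U Q ψ →
        φ.comp ψ = ψ.comp φ) →
      φ = 0) ∧
    (∀ φ : Vtot U Q →ₗ[ℂ] Vtot U Q, InSp U Q ω φ → IsDeg₁ U Q φ →
      (∀ ψ : Vtot U Q →ₗ[ℂ] Vtot U Q, InSp U Q ω ψ → IsDegNeg₂ U Q ψ →
        φ.comp ψ = ψ.comp φ) →
      φ = 0) := by
  have hanti : ∀ p q : Q, ω p q = -ω q p := by
    intro p q
    have h := halt (p + q)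
    simp only [map_add, LinearMap.add_apply, halt] at h
    linear_combination h
  obtain ⟨a, b, hab⟩ : ∃ a b, ω a b ≠ 0 := by
    by_contra h
    push_neg at h
    exact hne (by ext p q; simpa using h p q)
  have ha : a ≠ 0 := by rintro rfl; simp at hab
  constructor
  · rintro φ hsp ⟨α, hα⟩ hcomm
    have key : ∀ u₀ u : U, α u u₀ = 0 := by
      intro u₀ u
      set γ : Module.Dual ℂ U →ₗ[ℂ] Q := -((Module.Dual.eval ℂ U u₀).smulRight a) with hγ
      set γ' : Q →ₗ[ℂ] U := (ω a).smulRight u₀ with hγ'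
      set ψ : Vtot U Q →ₗ[ℂ] Vtot U Q :=
        (γ.comp ((LinearMap.snd ℂ U (Module.Dual ℂ U)).comp
          (LinearMap.snd ℂ Q (U × Module.Dual ℂ U)))).prod
          ((γ'.comp (LinearMap.fst ℂ Q (U × Module.Dual ℂ U))).prod 0) with hψdef
      have hψ : ∀ x : Vtot U Q, ψ x = (γ x.2.2, γ' x.1, 0) := fun x => rfl
      have hγapp : ∀ f : Module.Dual ℂ U, γ f = -(f u₀) • a := fun f => by
        simp [hγ, Module.Dual.eval]
      have hγ'app : ∀ q : Q, γ' q = (ω a q) • u₀ := fun q => rfl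
      have hψsp : InSp U Q ω ψ := by
        intro x y
        simp only [omegaT, hψ, hγapp, hγ'app, map_smul, map_neg, LinearMap.neg_apply,
          LinearMap.smul_apply, smul_eq_mul, LinearMap.map_smul₂, LinearMap.zero_apply]
        linear_combination -(y.2.2 u₀) * hanti x.1 a
      have heq := hcomm ψ hψsp ⟨γ, γ', hψ⟩
      have h0 := DFunLike.congr_fun heq ((0 : Q), u, (0 : Module.Dual ℂ U))
      simp only [LinearMap.comp_apply, hψ, hα, map_zero, hγapp, hγ'app] at h0
      have h1 : (-(α u u₀) • a : Q) = 0 := by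
        have := congrArg Prod.fst h0
        simpa using this.symm
      rcases smul_eq_zero.mp h1 with h | h
      · simpa [neg_eq_zero] using h
      · exact absurd h ha
    have hα0 : α = 0 := by
      ext u u₀
      exact key u₀ u
    refine LinearMap.ext fun x => ?_
    rw [hα x, hα0]
    simp
  · rintro φ hsp ⟨β, β', hβ⟩ hcomm
    have hβ' : ∀ q u, β' q u = ω (β u) q := by
      intro q u
      have h := hsp ((0 : Q), u, (0 : Module.Dual ℂ U)) (q, (0 : U), (0 : Module.Dual ℂ U))
      simp only [omegaT, hβ, map_zero, LinearMap.zero_apply] at h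
      linear_combination -h
    have key : ∀ u₀ : U, β u₀ = 0 := by
      intro u₀
      set η : Module.Dual ℂ U →ₗ[ℂ] U := (Module.Dual.eval ℂ U u₀).smulRight u₀ with hη
      set ψ : Vtot U Q →ₗ[ℂ] Vtot U Q :=
        (0 : Vtot U Q →ₗ[ℂ] Q).prod
          ((η.comp ((LinearMap.snd ℂ U (Module.Dual ℂ U)).comp
            (LinearMap.snd ℂ Q (U × Module.Dual ℂ U)))).prod 0) with hψdef
      have hψ : ∀ x : Vtot U Q, ψ x = (0, η x.2.2, 0) := fun x => rfl
      have hηapp : ∀ f : Module.Dual ℂ U, η f = (f u₀) • u₀ := fun f => rfl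
      have hψsp : InSp U Q ω ψ := by
        intro x y
        simp only [omegaT, hψ, hηapp, map_zero, map_smul, smul_eq_mul,
          LinearMap.zero_apply]
        ring
      have heq := hcomm ψ hψsp ⟨η, hψ⟩
      have hb : ∀ f : Module.Dual ℂ U, (f u₀) • β u₀ = 0 := by
        intro f
        have h0 := DFunLike.congr_fun heq ((0 : Q), (0 : U), f)
        simp only [LinearMap.comp_apply, hψ, hβ, hηapp, map_zero, map_smul] at h0
        have := congrArg Prod.fst h0
        simpa using this
      by_contra hb0
      have : ∀ f : Module.Dual ℂ U, f u₀ = 0 := by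
        intro f
        rcases smul_eq_zero.mp (hb f) with h | h
        · exact h
        · exact absurd h hb0
      have : u₀ = 0 := (Module.forall_dual_apply_eq_zero_iff ℂ u₀).mp this
      exact hb0 (by simp [this])
    have hβ0 : β = 0 := by ext u; exact key u
    have hβ'0 : β' = 0 := by
      ext q u
      simp [hβ' q u, hβ0]
    refine LinearMap.ext fun x => ?_
    rw [hβ x, hβ0, hβ'0]
    simp
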